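/- If f ∈ K (i.e. f = K_μ for some complex Borel measure μ on T) and F is a primitive of f on the unit disk, then F ∘ φ_a has derivative in K; consequently if f ∈ J then f ∘ φ_a differs from an element of J by a constant, for any -1 < a < 1. -/

import Mathlib

open MeasureTheory Metric Complex

/-- The Cauchy-type kernel `1/(ξ - z) - ξ/(1 - ξ z)`. -/
noncomputable def Kker (ξ z : ℂ) : ℂ := 1 / (ξ - z) - ξ / (1 - ξ * z)

/-- The logarithmic kernel `log((1 - ξ z)/(1 - conj ξ z))` (principal branch, which is
the branch vanishing at `z = 0`). -/
noncomputable def Jker (ξ z : ℂ) : ℂ :=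
  Complex.log ((1 - ξ * z) / (1 - (starRingEnd ℂ) ξ * z))

/-- `f ∈ K` (measure encoded as `w dP`). -/
def MemK (f : ℂ → ℂ) : Prop :=
  ∃ (P : Measure ℂ) (w : ℂ → ℂ), IsFiniteMeasure P ∧ (∀ᵐ ξ ∂P, ‖ξ‖ = 1) ∧
    Integrable w P ∧ ∀ z ∈ ball (0 : ℂ) 1, f z = ∫ ξ, Kker ξ z * w ξ ∂P

/-- `f ∈ J` (measure encoded as `w dP`). -/
def MemJ (f : ℂ → ℂ) : Prop :=
  ∃ (P : Measure ℂ) (w : ℂ → ℂ), IsFiniteMeasure P ∧ (∀ᵐ ξ ∂P, ‖ξ‖ = 1) ∧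
    Integrable w P ∧ ∀ z ∈ ball (0 : ℂ) 1, f z = ∫ ξ, Jker ξ z * w ξ ∂P

/-! ### Auxiliary lemmas -/

lemma ne1' {ξ z : ℂ} (hξ : ‖ξ‖ = 1) (hz : ‖z‖ < 1) : ξ - z ≠ 0 := by
  intro h
  rw [sub_eq_zero] at h
  rw [← h, hξ] at hz
  exact lt_irrefl _ hz

lemma ne2' {ξ z : ℂ} (hξ : ‖ξ‖ ≤ 1) (hz : ‖z‖ < 1) : 1 - ξ * z ≠ 0 := by
  intro h
  have h2 : ‖ξ * z‖ < 1 := by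
    rw [norm_mul]
    calc ‖ξ‖ * ‖z‖ ≤ 1 * ‖z‖ := mul_le_mul_of_nonneg_right hξ (norm_nonneg _)
      _ < 1 := by simpa
  rw [sub_eq_zero] at h
  rw [← h] at h2
  simp at h2

lemma na' {a : ℝ} (ha : -1 < a) (ha' : a < 1) : ‖(a : ℂ)‖ < 1 := by
  rw [Complex.norm_real, Real.norm_eq_abs, abs_lt]; exact ⟨ha, ha'⟩

lemma ne3' {a : ℝ} (ha : -1 < a) (ha' : a < 1) {z : ℂ} (hz : ‖z‖ ≤ 1) :
    (1 : ℂ) + z * a ≠ 0 := by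
  intro h
  have h2 : 1 - z * (-(a:ℂ)) ≠ 0 := ne2' hz (by simpa using na' ha ha')
  exact h2 (by linear_combination h)

lemma conj_circ' {ξ : ℂ} (hξ : ‖ξ‖ = 1) : (starRingEnd ℂ) ξ * ξ = 1 := by
  rw [mul_comm, Complex.mul_conj]
  norm_cast
  rw [Complex.normSq_eq_norm_sq, hξ]; norm_num

lemma normsq_lt' {z : ℂ} (hz : ‖z‖ < 1) : z.re ^ 2 + z.im ^ 2 < 1 := by
  have h := Complex.normSq_eq_norm_sq z
  have : Complex.normSq z < 1 := by
    rw [h]; nlinarith [norm_nonneg z]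
  rw [Complex.normSq_apply] at this; nlinarith

lemma mobius_ball' {a : ℝ} (ha : -1 < a) (ha' : a < 1) {z : ℂ} (hz : ‖z‖ < 1) :
    ‖(z + a) / (1 + z * a)‖ < 1 := by
  rw [norm_div, div_lt_one (norm_pos_iff.mpr (ne3' ha ha' hz.le))]
  have hsq := normsq_lt' hz
  have key : ‖z + (a:ℂ)‖ ^ 2 < ‖1 + z * (a:ℂ)‖ ^ 2 := by
    rw [Complex.sq_norm, Complex.sq_norm,
      Complex.normSq_apply, Complex.normSq_apply]
    simp only [Complex.add_re, Complex.add_im, Complex.mul_re, Complex.mul_im,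
      Complex.ofReal_re, Complex.ofReal_im, Complex.one_re, Complex.one_im]
    ring_nf
    nlinarith [mul_pos (by nlinarith : (0:ℝ) < 1 - a^2)
      (by nlinarith : (0:ℝ) < 1 - z.re^2 - z.im^2)]
  nlinarith [norm_nonneg (z + (a:ℂ)), norm_nonneg (1 + z * (a:ℂ))]

lemma ne_ax' {a : ℝ} (ha : -1 < a) (ha' : a < 1) {ξ : ℂ} (hξ : ‖ξ‖ = 1) :
    (1 : ℂ) - a * ξ ≠ 0 := by
  intro h
  have h2 : ‖(a:ℂ) * ξ‖ < 1 := by rw [norm_mul, hξ, mul_one]; exact na' ha ha'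
  rw [sub_eq_zero] at h
  rw [← h] at h2
  simp at h2

lemma circ_circ' {a : ℝ} (ha : -1 < a) (ha' : a < 1) {ξ : ℂ} (hξ : ‖ξ‖ = 1) :
    ‖(ξ - a) / (1 - a * ξ)‖ = 1 := by
  have hc : (starRingEnd ℂ) ξ * ξ = 1 := conj_circ' hξ
  have h1 : ‖(1 : ℂ) - a * ξ‖ = ‖ξ - a‖ := by
    calc ‖(1:ℂ) - a * ξ‖ = ‖(starRingEnd ℂ) ((1:ℂ) - a * ξ)‖ := (RCLike.norm_conj _).symm
      _ = ‖ξ‖ * ‖(1:ℂ) - a * (starRingEnd ℂ) ξ‖ := by rw [hξ, one_mul]; simp [map_sub, map_mul]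
      _ = ‖ξ * (1 - a * (starRingEnd ℂ) ξ)‖ := by rw [norm_mul]
      _ = ‖ξ - a‖ := by
          congr 1
          rw [mul_sub, mul_one,
            show ξ * ((a:ℂ) * (starRingEnd ℂ) ξ) = (a:ℂ) * ((starRingEnd ℂ) ξ * ξ) by ring,
            hc, mul_one]
  have h2 : ξ - (a:ℂ) ≠ 0 := ne1' hξ (na' ha ha')
  rw [norm_div, h1, div_self (norm_ne_zero_iff.mpr h2)]

/-- The key algebraic identity for the Cauchy kernel under the Möbius map. -/
lemma Kmob {a : ℝ} {ξ z : ℂ}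
    (h1 : (1:ℂ) + z * a ≠ 0) (h2 : (1:ℂ) - a * ξ ≠ 0)
    (h3 : ξ - (z + a) / (1 + z * a) ≠ 0) (h4 : (1:ℂ) - ξ * ((z + a) / (1 + z * a)) ≠ 0)
    (h5 : (ξ - a) / (1 - a * ξ) - z ≠ 0) (h6 : (1:ℂ) - (ξ - a) / (1 - a * ξ) * z ≠ 0) :
    Kker ξ ((z + a) / (1 + z * a)) * ((1 - (a:ℂ)^2) / (1 + z * a)^2)
      = Kker ((ξ - a) / (1 - a * ξ)) z := by
  have d1 : ξ * (1 + z * a) - (z + a) ≠ 0 := by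
    intro h; apply h3; field_simp; linear_combination h
  have d2 : (1 + z * (a:ℂ)) - ξ * (z + a) ≠ 0 := by
    intro h; apply h4; field_simp; linear_combination h
  have d3 : (ξ - (a:ℂ)) - z * (1 - a * ξ) ≠ 0 := by
    intro h; apply h5; rw [sub_eq_zero, div_eq_iff h2]; linear_combination h
  have d4 : (1 - (a:ℂ) * ξ) - (ξ - a) * z ≠ 0 := by
    intro h; apply h6; rw [div_mul_eq_mul_div, sub_eq_zero, eq_div_iff h2]; linear_combination h
  unfold Kker
  rw [show ξ - (z + a) / (1 + z * (a:ℂ))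
        = (ξ * (1 + z * a) - (z + a)) / (1 + z * a) by field_simp <;> ring,
    show (1:ℂ) - ξ * ((z + a) / (1 + z * a))
        = ((1 + z * (a:ℂ)) - ξ * (z + a)) / (1 + z * a) by field_simp <;> ring,
    show (ξ - (a:ℂ)) / (1 - a * ξ) - z
        = ((ξ - (a:ℂ)) - z * (1 - a * ξ)) / (1 - a * ξ) by rw [div_sub' h2]; ring,
    show (1:ℂ) - (ξ - a) / (1 - a * ξ) * z
        = ((1 - (a:ℂ) * ξ) - (ξ - a) * z) / (1 - a * ξ) by rw [div_mul_eq_mul_div, sub_div' h2]; ring]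
  rw [one_div_div, one_div_div, div_div_eq_mul_div, div_div_div_cancel_right₀ h2,
    div_sub_div _ _ d1 d2, div_sub_div _ _ d3 d4, div_mul_div_comm,
    div_eq_div_iff (mul_ne_zero (mul_ne_zero d1 d2) (pow_ne_zero 2 h1)) (mul_ne_zero d3 d4)]
  ring

lemma slit_aux' {p q x y : ℝ} (hp : p^2 + q^2 = 1) (hr : x^2 + y^2 < 1)
    (h0 : -2*q*x + 2*p*q*(x^2+y^2) = 0) :
    0 < 1 - 2*p*x + (p^2 - q^2)*(x^2+y^2) := by
  have h : q * (p*(x^2+y^2) - x) = 0 := by linarith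
  rcases mul_eq_zero.mp h with hq | hx
  · have hp2 : p^2 = 1 := by nlinarith
    have h1 : (p-1)*(p+1) = 0 := by nlinarith
    rcases mul_eq_zero.mp h1 with h2 | h2
    · have : p = 1 := by linarith
      subst this hq
      nlinarith [sq_nonneg (1-x), sq_nonneg y, sq_nonneg (1+x)]
    · have : p = -1 := by linarith
      subst this hq
      nlinarith [sq_nonneg (1-x), sq_nonneg y, sq_nonneg (1+x)]
  · have hx' : p*(x^2+y^2) - x = 0 := hx
    have key : 1 - 2*p*x + (p^2 - q^2)*(x^2+y^2) = 1 - (x^2+y^2) := by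
      linear_combination 2*p*hx' - (x^2+y^2)*hp
    rw [key]; linarith

lemma slit' {ξ z : ℂ} (hξ : ‖ξ‖ = 1) (hz : ‖z‖ < 1) :
    (1 - ξ * z) / (1 - (starRingEnd ℂ) ξ * z) ∈ Complex.slitPlane := by
  set u := 1 - ξ * z with hu
  set v := 1 - (starRingEnd ℂ) ξ * z with hv
  have hp : ξ.re^2 + ξ.im^2 = 1 := by
    have := Complex.normSq_eq_norm_sq ξ
    rw [hξ] at this
    rw [Complex.normSq_apply] at this; nlinarith
  have hr : z.re^2 + z.im^2 < 1 := normsq_lt' hz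
  have hvre : v.re = 1 - (ξ.re * z.re + ξ.im * z.im) := by
    simp [hv, Complex.sub_re, Complex.mul_re]; try ring
  have hvim : v.im = -(ξ.re * z.im - ξ.im * z.re) := by
    simp [hv, Complex.sub_im, Complex.mul_im]; try ring
  have hure : u.re = 1 - (ξ.re * z.re - ξ.im * z.im) := by
    simp [hu, Complex.sub_re, Complex.mul_re]; try ring
  have huim : u.im = -(ξ.re * z.im + ξ.im * z.re) := by
    simp [hu, Complex.sub_im, Complex.mul_im]; try ring
  have hvns : 0 < Complex.normSq v := by
    rw [Complex.normSq_pos]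
    exact ne2' (by simp [RCLike.norm_conj, hξ] : ‖(starRingEnd ℂ) ξ‖ ≤ 1) hz
  rw [Complex.mem_slitPlane_iff]
  by_cases him : (u / v).im = 0
  · left
    rw [Complex.div_re]
    rw [Complex.div_im] at him
    have h0 : u.im * v.re - u.re * v.im = 0 := by
      field_simp [ne_of_gt hvns] at him
      linarith
    have hkey := slit_aux' hp hr (by rw [hure, huim, hvre, hvim] at h0; ring_nf at h0 ⊢; linarith)
    have hnum : 0 < u.re * v.re + u.im * v.im := by
      rw [hure, huim, hvre, hvim]; ring_nf; ring_nf at hkey; linarith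
    have := div_pos hnum hvns
    rw [add_div] at this
    exact this
  · right; exact him

lemma hasDeriv_Jker' {ξ z : ℂ} (hξ : ‖ξ‖ = 1) (hz : ‖z‖ < 1) :
    HasDerivAt (fun w => Jker ξ w) (Kker ξ z) z := by
  have hslit := slit' hξ hz
  have hc : (starRingEnd ℂ) ξ * ξ = 1 := conj_circ' hξ
  have hu : 1 - ξ * z ≠ 0 := ne2' hξ.le hz
  have hv : 1 - (starRingEnd ℂ) ξ * z ≠ 0 :=
    ne2' (by simp [RCLike.norm_conj, hξ]) hz
  have hxz : ξ - z ≠ 0 := ne1' hξ hz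
  set c := (starRingEnd ℂ) ξ with hcdef
  have hξ0 : ξ ≠ 0 := by intro h; rw [h, norm_zero] at hξ; norm_num at hξ
  have hcinv : c = ξ⁻¹ := eq_inv_of_mul_eq_one_left hc
  have hN : HasDerivAt (fun w => (1 - ξ * w) / (1 - c * w))
      (((-ξ) * (1 - c * z) - (1 - ξ * z) * (-c)) / (1 - c * z)^2) z := by
    apply HasDerivAt.div
    · simpa using ((hasDerivAt_id z).const_mul ξ).const_sub 1
    · simpa using ((hasDerivAt_id z).const_mul c).const_sub 1
    · exact hv
  have hlog := (Complex.hasDerivAt_log hslit).comp z hN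
  convert hlog using 1 <;> try rfl
  unfold Kker
  rw [hcinv] at hv ⊢
  field_simp
  ring

lemma hasDeriv_mobius' {a : ℝ} (ha : -1 < a) (ha' : a < 1) {z : ℂ} (hz : ‖z‖ < 1) :
    HasDerivAt (fun w : ℂ => (w + a) / (1 + w * a))
      ((1 - (a:ℂ)^2) / (1 + z * a)^2) z := by
  have h1 : (1:ℂ) + z * a ≠ 0 := ne3' ha ha' hz.le
  have hN : HasDerivAt (fun w : ℂ => (w + (a:ℂ)) / (1 + w * a))
      ((1 * (1 + z * a) - (z + a) * a) / (1 + z * a)^2) z := by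
    apply HasDerivAt.div
    · simpa using (hasDerivAt_id z).add_const (a:ℂ)
    · simpa using ((hasDerivAt_id z).mul_const (a:ℂ)).const_add 1
    · exact h1
  rw [show (1 - (a:ℂ)^2) = 1 * (1 + z * (a:ℂ)) - (z + (a:ℂ)) * (a:ℂ) by ring]
  exact hN

/-- `Jker ξ 0 = 0`. -/
lemma Jker_zero (ξ : ℂ) : Jker ξ 0 = 0 := by
  unfold Jker
  simp

/-- The key identity for the logarithmic kernel under the Möbius map. -/
lemma Jmob {a : ℝ} (ha : -1 < a) (ha' : a < 1) {ξ z : ℂ} (hξ : ‖ξ‖ = 1) (hz : ‖z‖ < 1) :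
    Jker ξ ((z + a) / (1 + z * a)) = Jker ((ξ - a) / (1 - a * ξ)) z + Jker ξ a := by
  set η := (ξ - (a:ℂ)) / (1 - a * ξ) with hη
  have hηc : ‖η‖ = 1 := circ_circ' ha ha' hξ
  set D : ℂ → ℂ := fun w => Jker ξ ((w + a) / (1 + w * a)) - Jker η w with hD
  have hderiv : ∀ w ∈ ball (0:ℂ) 1, HasDerivAt D 0 w := by
    intro w hw
    rw [mem_ball_zero_iff] at hw
    have hφw : ‖(w + (a:ℂ)) / (1 + w * a)‖ < 1 := mobius_ball' ha ha' hw
    have h1 : (1:ℂ) + w * a ≠ 0 := ne3' ha ha' hw.le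
    have hcomp : HasDerivAt (fun v => Jker ξ ((v + a) / (1 + v * a)))
        (Kker ξ ((w + a) / (1 + w * a)) * ((1 - (a:ℂ)^2) / (1 + w * a)^2)) w :=
      HasDerivAt.comp (h₂ := fun v => Jker ξ v) (h := fun v : ℂ => (v + a) / (1 + v * a)) w (hasDeriv_Jker' hξ hφw) (hasDeriv_mobius' ha ha' hw)
    have h2 : HasDerivAt (fun v => Jker η v) (Kker η w) w := hasDeriv_Jker' hηc hw
    have hK : Kker ξ ((w + a) / (1 + w * a)) * ((1 - (a:ℂ)^2) / (1 + w * a)^2)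
        = Kker η w := by
      apply Kmob h1 (ne_ax' ha ha' hξ) (ne1' hξ hφw) (ne2' hξ.le hφw)
        (ne1' hηc hw) (ne2' hηc.le hw)
    have := hcomp.sub h2
    rw [hK, sub_self] at this
    exact this
  have hconst : D z = D 0 := by
    have hball : Convex ℝ (ball (0:ℂ) 1) := convex_ball 0 1
    have hzero : (1 : ℂ →L[ℝ] ℂ).smulRight (0:ℂ) = 0 := by ext; simp
    have hmvt := Convex.norm_image_sub_le_of_norm_hasFDerivWithin_le
      (f := D) (f' := fun _ => (0 : ℂ →L[ℝ] ℂ)) (C := 0) (s := ball (0:ℂ) 1)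
      (fun x hx => by
        have := ((hderiv x hx).hasFDerivAt.restrictScalars ℝ).hasFDerivWithinAt
          (s := ball (0:ℂ) 1)
        convert this using 1
        ext
        simp)
      (fun x _ => by simp) hball (mem_ball_self one_pos) (by simpa using hz)
    have : ‖D z - D 0‖ ≤ 0 := by simpa using hmvt
    have := le_antisymm this (norm_nonneg _)
    rwa [norm_sub_eq_zero_iff] at this
  have hD0 : D 0 = Jker ξ a := by
    simp only [hD]
    rw [Jker_zero]
    norm_num
  have := hconst.trans hD0
  simp only [hD] at this
  linear_combination this

lemma Jker_bound {z : ℂ} (hz : ‖z‖ < 1) {ξ : ℂ} (hξ : ‖ξ‖ = 1) :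
    ‖Jker ξ z‖ ≤ Real.log ((1 + ‖z‖) / (1 - ‖z‖)) + Real.pi := by
  have hr0 : (0:ℝ) ≤ ‖z‖ := norm_nonneg z
  have hden : (0:ℝ) < 1 - ‖z‖ := by linarith
  have hM1 : (1:ℝ) ≤ (1 + ‖z‖) / (1 - ‖z‖) := by
    rw [le_div_iff₀ hden]; linarith
  set u := 1 - ξ * z with hu
  set v := 1 - (starRingEnd ℂ) ξ * z with hv
  have hcn : ‖(starRingEnd ℂ) ξ‖ = 1 := by simp [RCLike.norm_conj, hξ]
  have hu0 : u ≠ 0 := ne2' hξ.le hz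
  have hv0 : v ≠ 0 := ne2' hcn.le hz
  have hub : ‖u‖ ≤ 1 + ‖z‖ := by
    calc ‖u‖ ≤ ‖(1:ℂ)‖ + ‖ξ * z‖ := norm_sub_le _ _
      _ = 1 + ‖z‖ := by rw [norm_mul, hξ, one_mul, norm_one]
  have hul : 1 - ‖z‖ ≤ ‖u‖ := by
    have := norm_sub_norm_le (1:ℂ) (ξ * z)
    rw [norm_one, norm_mul, hξ, one_mul] at this
    exact this
  have hvb : ‖v‖ ≤ 1 + ‖z‖ := by
    calc ‖v‖ ≤ ‖(1:ℂ)‖ + ‖(starRingEnd ℂ) ξ * z‖ := norm_sub_le _ _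
      _ = 1 + ‖z‖ := by rw [norm_mul, hcn, one_mul, norm_one]
  have hvl : 1 - ‖z‖ ≤ ‖v‖ := by
    have := norm_sub_norm_le (1:ℂ) ((starRingEnd ℂ) ξ * z)
    rw [norm_one, norm_mul, hcn, one_mul] at this
    exact this
  have hwpos : 0 < ‖u / v‖ := norm_pos_iff.mpr (div_ne_zero hu0 hv0)
  have habs_le : ‖u / v‖ ≤ (1 + ‖z‖) / (1 - ‖z‖) := by
    rw [norm_div]
    exact div_le_div₀ (by linarith) hub hden hvl
  have habs_ge : (1 - ‖z‖) / (1 + ‖z‖) ≤ ‖u / v‖ := by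
    rw [norm_div]
    exact div_le_div₀ (norm_nonneg u) hul (lt_of_lt_of_le hden hvl) hvb
  have hA : ‖u / v‖ = ‖u / v‖ := rfl
  have hlog_le : |Real.log (‖u / v‖)| ≤ Real.log ((1 + ‖z‖) / (1 - ‖z‖)) := by
    rw [abs_le, hA]
    constructor
    · rw [← Real.log_inv, ← one_div, one_div_div]
      exact Real.log_le_log (by apply div_pos <;> linarith) habs_ge
    · exact Real.log_le_log hwpos habs_le
  have harg : |Complex.arg (u / v)| ≤ Real.pi := Complex.abs_arg_le_pi _
  have : ‖Jker ξ z‖ ≤ |Real.log (‖u / v‖)| + |Complex.arg (u / v)| := by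
    unfold Jker
    calc ‖Complex.log (u / v)‖
        ≤ |(Complex.log (u / v)).re| + |(Complex.log (u / v)).im| :=
          Complex.norm_le_abs_re_add_abs_im _
      _ = |Real.log (‖u / v‖)| + |Complex.arg (u / v)| := by
          rw [Complex.log_re, Complex.log_im]
  linarith

lemma gmap_measurable (a : ℝ) : Measurable (fun ξ : ℂ => (ξ - a) / (1 - a * ξ)) := by
  apply Measurable.div
  · exact measurable_id.sub_const _
  · exact measurable_const.sub (measurable_id.const_mul _)

lemma phimap_measurable (a : ℝ) : Measurable (fun η : ℂ => (η + a) / (1 + η * a)) := by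
  apply Measurable.div
  · exact measurable_id.add_const _
  · exact measurable_const.add (measurable_id.mul_const _)

lemma Kker_measurable (z : ℂ) : Measurable (fun ξ : ℂ => Kker ξ z) := by
  unfold Kker
  apply Measurable.sub
  · exact measurable_const.div (measurable_id.sub_const _)
  · exact measurable_id.div (measurable_const.sub (measurable_id.mul_const _))

lemma Jker_measurable (z : ℂ) : Measurable (fun ξ : ℂ => Jker ξ z) := by
  unfold Jker
  apply Complex.measurable_log.comp
  apply Measurable.div
  · exact measurable_const.sub (measurable_id.mul_const _)
  · exact measurable_const.sub ((Complex.continuous_conj.measurable).mul_const _)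

lemma gmap_cancel {a : ℝ} (ha : -1 < a) (ha' : a < 1) {ξ : ℂ} (hξ : ‖ξ‖ = 1) :
    ((ξ - a) / (1 - a * ξ) + a) / (1 + (ξ - a) / (1 - a * ξ) * a) = ξ := by
  have hd : (1:ℂ) - a * ξ ≠ 0 := ne_ax' ha ha' hξ
  have hgc : ‖(ξ - (a:ℂ)) / (1 - a * ξ)‖ = 1 := circ_circ' ha ha' hξ
  have hne : (1:ℂ) + (ξ - a) / (1 - a * ξ) * a ≠ 0 := ne3' ha ha' hgc.le
  rw [div_eq_iff hne]
  have hd' : (1:ℂ) - ξ * a ≠ 0 := by rwa [mul_comm]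
  field_simp
  ring

theorem stmt15 (a : ℝ) (ha : -1 < a) (ha' : a < 1)
    (f : ℂ → ℂ) (hf : MemK f)
    (F : ℂ → ℂ) (hF : ∀ z ∈ ball (0 : ℂ) 1, HasDerivAt F (f z) z) :
    MemK (deriv (fun z => F ((z + a) / (1 + z * a)))) ∧
    ∀ g : ℂ → ℂ, MemJ g → ∃ (h : ℂ → ℂ) (c : ℂ), MemJ h ∧
      ∀ z ∈ ball (0 : ℂ) 1, g ((z + a) / (1 + z * a)) = h z + c := by
  have hgm : Measurable (fun ξ : ℂ => (ξ - a) / (1 - a * ξ)) := gmap_measurable a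
  have hcircset : MeasurableSet {x : ℂ | ‖x‖ = 1} :=
    measurable_norm (measurableSet_singleton 1)
  constructor
  · -- Part 1
    obtain ⟨P, w, hPfin, hPcirc, hwInt, hrep⟩ := hf
    have hwm := hwInt.aestronglyMeasurable
    have hw₀sm : StronglyMeasurable (hwm.mk w) := hwm.stronglyMeasurable_mk
    have hww₀ : w =ᵐ[P] hwm.mk w := hwm.ae_eq_mk
    have hw'sm : StronglyMeasurable (fun η : ℂ => hwm.mk w ((η + a) / (1 + η * a))) :=
      hw₀sm.comp_measurable (phimap_measurable a)
    have hPcirc' : ∀ᵐ η ∂(P.map (fun ξ : ℂ => (ξ - a) / (1 - a * ξ))), ‖η‖ = 1 := by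
      rw [MeasureTheory.ae_map_iff hgm.aemeasurable hcircset]
      filter_upwards [hPcirc] with ξ hξ
      exact circ_circ' ha ha' hξ
    have hInt' : Integrable (fun η : ℂ => hwm.mk w ((η + a) / (1 + η * a)))
        (P.map (fun ξ : ℂ => (ξ - a) / (1 - a * ξ))) := by
      refine (integrable_map_measure hw'sm.aestronglyMeasurable hgm.aemeasurable).mpr ?_
      apply hwInt.congr
      filter_upwards [hPcirc, hww₀] with ξ h1 h2
      show w ξ = hwm.mk w (((ξ - ↑a) / (1 - ↑a * ξ) + ↑a) / (1 + (ξ - ↑a) / (1 - ↑a * ξ) * ↑a))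
      rw [gmap_cancel ha ha' h1, h2]
    refine ⟨P.map (fun ξ : ℂ => (ξ - a) / (1 - a * ξ)),
      fun η : ℂ => hwm.mk w ((η + a) / (1 + η * a)),
      Measure.isFiniteMeasure_map P _, hPcirc', hInt', ?_⟩
    intro z hz
    have hz' : ‖z‖ < 1 := mem_ball_zero_iff.mp hz
    have hφz : ‖(z + (a:ℂ)) / (1 + z * a)‖ < 1 := mobius_ball' ha ha' hz'
    have hd := (hF _ (mem_ball_zero_iff.mpr hφz)).comp z (hasDeriv_mobius' ha ha' hz')
    have hderiv : deriv (fun z => F ((z + (a:ℂ)) / (1 + z * a))) z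
        = f ((z + (a:ℂ)) / (1 + z * a)) * ((1 - (a:ℂ)^2) / (1 + z * a)^2) := hd.deriv
    rw [hderiv, hrep _ (mem_ball_zero_iff.mpr hφz), ← integral_mul_const]
    have hmeas' : AEStronglyMeasurable
        (fun η : ℂ => Kker η z * hwm.mk w ((η + a) / (1 + η * a)))
        (P.map (fun ξ : ℂ => (ξ - a) / (1 - a * ξ))) :=
      ((Kker_measurable z).stronglyMeasurable.mul hw'sm).aestronglyMeasurable
    rw [integral_map hgm.aemeasurable hmeas']
    apply integral_congr_ae
    filter_upwards [hPcirc, hww₀] with ξ h1 h2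
    have hcc := circ_circ' ha ha' h1
    have hKm := Kmob (a := a) (ξ := ξ) (z := z) (ne3' ha ha' hz'.le) (ne_ax' ha ha' h1)
      (ne1' h1 hφz) (ne2' h1.le hφz) (ne1' hcc hz') (ne2' hcc.le hz')
    calc Kker ξ ((z + (a:ℂ)) / (1 + z * a)) * w ξ * ((1 - (a:ℂ)^2) / (1 + z * a)^2)
        = (Kker ξ ((z + (a:ℂ)) / (1 + z * a)) * ((1 - (a:ℂ)^2) / (1 + z * a)^2)) * w ξ := by
          ring
      _ = Kker ((ξ - a) / (1 - a * ξ)) z * w ξ := by rw [hKm]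
      _ = Kker ((ξ - a) / (1 - a * ξ)) z
            * hwm.mk w (((ξ - ↑a) / (1 - ↑a * ξ) + ↑a) / (1 + (ξ - ↑a) / (1 - ↑a * ξ) * ↑a)) := by
          rw [gmap_cancel ha ha' h1, h2]
  · -- Part 2
    rintro g ⟨Q, v, hQfin, hQcirc, hvInt, hgrep⟩
    have hvm := hvInt.aestronglyMeasurable
    have hv₀sm : StronglyMeasurable (hvm.mk v) := hvm.stronglyMeasurable_mk
    have hvv₀ : v =ᵐ[Q] hvm.mk v := hvm.ae_eq_mk
    have hv'sm : StronglyMeasurable (fun η : ℂ => hvm.mk v ((η + a) / (1 + η * a))) :=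
      hv₀sm.comp_measurable (phimap_measurable a)
    have hQcirc' : ∀ᵐ η ∂(Q.map (fun ξ : ℂ => (ξ - a) / (1 - a * ξ))), ‖η‖ = 1 := by
      rw [MeasureTheory.ae_map_iff hgm.aemeasurable hcircset]
      filter_upwards [hQcirc] with ξ hξ
      exact circ_circ' ha ha' hξ
    have hInt' : Integrable (fun η : ℂ => hvm.mk v ((η + a) / (1 + η * a)))
        (Q.map (fun ξ : ℂ => (ξ - a) / (1 - a * ξ))) := by
      refine (integrable_map_measure hv'sm.aestronglyMeasurable hgm.aemeasurable).mpr ?_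
      apply hvInt.congr
      filter_upwards [hQcirc, hvv₀] with ξ h1 h2
      show v ξ = hvm.mk v (((ξ - ↑a) / (1 - ↑a * ξ) + ↑a) / (1 + (ξ - ↑a) / (1 - ↑a * ξ) * ↑a))
      rw [gmap_cancel ha ha' h1, h2]
    refine ⟨fun z => ∫ η, Jker η z * hvm.mk v ((η + a) / (1 + η * a))
        ∂(Q.map (fun ξ : ℂ => (ξ - a) / (1 - a * ξ))),
      ∫ ξ, Jker ξ (a:ℂ) * v ξ ∂Q,
      ⟨Q.map (fun ξ : ℂ => (ξ - a) / (1 - a * ξ)),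
        fun η : ℂ => hvm.mk v ((η + a) / (1 + η * a)),
        Measure.isFiniteMeasure_map Q _, hQcirc', hInt', fun z _ => rfl⟩, ?_⟩
    intro z hz
    have hz' : ‖z‖ < 1 := mem_ball_zero_iff.mp hz
    have hφz : ‖(z + (a:ℂ)) / (1 + z * a)‖ < 1 := mobius_ball' ha ha' hz'
    have hIa : ‖(a:ℂ)‖ < 1 := na' ha ha'
    have I1 : Integrable (fun ξ : ℂ => Jker ((ξ - a) / (1 - a * ξ)) z * v ξ) Q := by
      apply hvInt.bdd_mul
        (((Jker_measurable z).comp hgm).stronglyMeasurable.aestronglyMeasurable)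
        (c := Real.log ((1 + ‖z‖) / (1 - ‖z‖)) + Real.pi)
      filter_upwards [hQcirc] with ξ h1
      exact Jker_bound hz' (circ_circ' ha ha' h1)
    have I2 : Integrable (fun ξ : ℂ => Jker ξ (a:ℂ) * v ξ) Q := by
      apply hvInt.bdd_mul ((Jker_measurable (a:ℂ)).stronglyMeasurable.aestronglyMeasurable)
        (c := Real.log ((1 + ‖(a:ℂ)‖) / (1 - ‖(a:ℂ)‖)) + Real.pi)
      filter_upwards [hQcirc] with ξ h1
      exact Jker_bound hIa h1
    have hmeas' : AEStronglyMeasurable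
        (fun η : ℂ => Jker η z * hvm.mk v ((η + a) / (1 + η * a)))
        (Q.map (fun ξ : ℂ => (ξ - a) / (1 - a * ξ))) :=
      ((Jker_measurable z).stronglyMeasurable.mul hv'sm).aestronglyMeasurable
    calc g ((z + (a:ℂ)) / (1 + z * a))
        = ∫ ξ, Jker ξ ((z + (a:ℂ)) / (1 + z * a)) * v ξ ∂Q :=
          hgrep _ (mem_ball_zero_iff.mpr hφz)
      _ = ∫ ξ, (Jker ((ξ - a) / (1 - a * ξ)) z * v ξ + Jker ξ (a:ℂ) * v ξ) ∂Q := by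
          apply integral_congr_ae
          filter_upwards [hQcirc] with ξ h1
          rw [Jmob ha ha' h1 hz']
          ring
      _ = (∫ ξ, Jker ((ξ - a) / (1 - a * ξ)) z * v ξ ∂Q) + ∫ ξ, Jker ξ (a:ℂ) * v ξ ∂Q :=
          integral_add I1 I2
      _ = (∫ η, Jker η z * hvm.mk v ((η + a) / (1 + η * a))
            ∂(Q.map (fun ξ : ℂ => (ξ - a) / (1 - a * ξ)))) + ∫ ξ, Jker ξ (a:ℂ) * v ξ ∂Q := by
          congr 1
          rw [integral_map hgm.aemeasurable hmeas']
          apply integral_congr_ae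
          filter_upwards [hQcirc, hvv₀] with ξ h1 h2
          rw [gmap_cancel ha ha' h1, h2]
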